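/- (𝕊¹,Σ*) is not co-decomposable to non-point-transitive (equivalently, non-minimal) transformation semigroups: for every family (H_α)_{α∈Γ} of subsemigroups of Σ*, each containing the identity, whose union generates Σ* and which satisfies the multi condition (for distinct α_1,…,α_n, elements h_j ∈ H_{α_j}, every z ∈ 𝕊¹ and every permutation m of {1,…,n}, z h_1⋯h_n = z h_{m_1}⋯h_{m_n}), there exists α ∈ Γ such that H_α is infinite and the action (𝕊¹,H_α) is minimal (in particular point transitive). -/

import Mathlib

open Real

/-- Rotation of the unit circle by angle `α` : `e^{iθ} ↦ e^{i(α+θ)}`. -/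
noncomputable def rotMap (α : ℝ) : Circle → Circle := fun z => Circle.exp α * z

/-- The conjugation map `η : e^{iθ} ↦ e^{-iθ}` of the unit circle. -/
noncomputable def conjMap : Circle → Circle := fun z => z⁻¹

/-- `ε_α = η φ_α : e^{iθ} ↦ e^{i(α-θ)}` (apply `η`, then the rotation `φ_α`). -/
noncomputable def reflMap (α : ℝ) : Circle → Circle := rotMap α ∘ conjMap

/-- `Σ* = {φ_α : α ∈ 2πℚ} ∪ {ε_α : α ∈ 2πℚ}`, the group generated by `η` together with
the rotations by rational multiples of `2π`. -/
noncomputable def SigmaStar : Set (Circle → Circle) :=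
  {f | (∃ q : ℚ, f = rotMap (2 * π * q)) ∨ (∃ q : ℚ, f = reflMap (2 * π * q))}

/-- The orbit `z A` of a point of the circle under a set of self-maps. -/
def circOrbit (z : Circle) (A : Set (Circle → Circle)) : Set Circle := {w | ∃ f ∈ A, w = f z}

/-- `P A = {z f : z ∈ P, f ∈ A}`. -/
def circActSet (P : Set Circle) (A : Set (Circle → Circle)) : Set Circle :=
  {w | ∃ z ∈ P, ∃ f ∈ A, w = f z}

/-- Left-to-right setwise product `A B = {f g : f ∈ A, g ∈ B}` (apply `f`, then `g`). -/
def compSet (A B : Set (Circle → Circle)) : Set (Circle → Circle) :=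
  {h | ∃ f ∈ A, ∃ g ∈ B, h = g ∘ f}


lemma rot_apply (a : ℝ) (z : Circle) : rotMap a z = Circle.exp a * z := rfl
lemma refl_apply (a : ℝ) (z : Circle) : reflMap a z = Circle.exp a * z⁻¹ := rfl

lemma rot_eq_of_exp_eq {a b : ℝ} (h : Circle.exp a = Circle.exp b) : rotMap a = rotMap b := by
  funext z; simp [rot_apply, h]

lemma refl_eq_of_exp_eq {a b : ℝ} (h : Circle.exp a = Circle.exp b) : reflMap a = reflMap b := by
  funext z; simp [refl_apply, h]

lemma rot_rot (a b : ℝ) (z : Circle) : rotMap a (rotMap b z) = rotMap (a + b) z := by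
  simp [rot_apply, Circle.exp_add, mul_assoc]

lemma rot_refl (a b : ℝ) (z : Circle) : rotMap a (reflMap b z) = reflMap (a + b) z := by
  simp [rot_apply, refl_apply, Circle.exp_add, mul_assoc]

lemma refl_rot (a b : ℝ) (z : Circle) : reflMap a (rotMap b z) = reflMap (a - b) z := by
  simp only [rot_apply, refl_apply, sub_eq_add_neg, Circle.exp_add, Circle.exp_neg, mul_inv]
  group

lemma refl_refl (a b : ℝ) (z : Circle) : reflMap a (reflMap b z) = rotMap (a - b) z := by
  simp only [rot_apply, refl_apply, sub_eq_add_neg, Circle.exp_add, Circle.exp_neg, mul_inv,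
    inv_inv]
  group

lemma id_eq_rot : (id : Circle → Circle) = rotMap 0 := by
  funext z; simp [rot_apply]

lemma rot_ne_refl (a b : ℝ) : rotMap a ≠ reflMap b := by
  intro h
  have h1 := congrFun h 1
  have h2 := congrFun h (Circle.exp (π/2))
  simp only [rot_apply, refl_apply, inv_one, mul_one] at h1
  simp only [rot_apply, refl_apply, h1] at h2
  have h3 : Circle.exp (π/2) = (Circle.exp (π/2))⁻¹ := mul_left_cancel h2
  rw [← Circle.exp_neg] at h3
  obtain ⟨m, hm⟩ := Circle.exp_eq_exp.mp h3
  have : π * (1 - 2 * m) = 0 := by push_cast at hm ⊢; linarith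
  rcases mul_eq_zero.mp this with h | h
  · exact Real.pi_ne_zero h
  · have : (2 * m : ℝ) = 1 := by linarith
    have : (2 * m : ℤ) = 1 := by exact_mod_cast this
    omega

/-- The 4-element (mod function equality) group `{id, φ_π, ε_c, ε_{c+π}}`, described as
maps of the form `rotMap a` or `reflMap (c+a)` with `exp (2a) = 1`. -/
def Kset (c : ℝ) : Set (Circle → Circle) :=
  {f | ∃ a : ℝ, Circle.exp (2 * a) = 1 ∧ (f = rotMap a ∨ f = reflMap (c + a))}

lemma id_mem_K (c : ℝ) : id ∈ Kset c :=
  ⟨0, by simp, Or.inl id_eq_rot⟩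

lemma exp_two_mul_eq (a : ℝ) : Circle.exp (2 * a) = Circle.exp a * Circle.exp a := by
  rw [two_mul, Circle.exp_add]

lemma K_comp {c : ℝ} {g k : Circle → Circle} (hg : g ∈ Kset c) (hk : k ∈ Kset c) :
    g ∘ k ∈ Kset c := by
  obtain ⟨a, ha, hga⟩ := hg
  obtain ⟨b, hb, hkb⟩ := hk
  rcases hga with rfl | rfl <;> rcases hkb with rfl | rfl
  · refine ⟨a + b, by rw [mul_add, Circle.exp_add, ha, hb, one_mul], Or.inl (funext fun z => ?_)⟩
    rw [Function.comp_apply, rot_rot]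
  · refine ⟨a + b, by rw [mul_add, Circle.exp_add, ha, hb, one_mul], Or.inr (funext fun z => ?_)⟩
    rw [Function.comp_apply, rot_refl]
    have : a + (c + b) = c + (a + b) := by ring
    rw [this]
  · refine ⟨a - b, by rw [mul_sub, sub_eq_add_neg, Circle.exp_add, Circle.exp_neg, ha, hb]; simp,
      Or.inr (funext fun z => ?_)⟩
    rw [Function.comp_apply, refl_rot]
    have : c + a - b = c + (a - b) := by ring
    rw [this]
  · refine ⟨a - b, by rw [mul_sub, sub_eq_add_neg, Circle.exp_add, Circle.exp_neg, ha, hb]; simp,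
      Or.inl (funext fun z => ?_)⟩
    rw [Function.comp_apply, refl_refl]
    have : c + a - (c + b) = a - b := by ring
    rw [this]

/-- A member of `Σ*` that commutes with the reflection `ε_c` lies in `Kset c`. -/
lemma mem_K_of_commute {c : ℝ} {f : Circle → Circle} (hf : f ∈ SigmaStar)
    (hc : ∀ z, f (reflMap c z) = reflMap c (f z)) : f ∈ Kset c := by
  rcases hf with ⟨q, rfl⟩ | ⟨q, rfl⟩
  · set a : ℝ := 2 * π * q with ha
    have h1 := hc 1
    rw [rot_refl, refl_rot] at h1
    have h2 : Circle.exp (a + c) = Circle.exp (c - a) := by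
      simpa only [refl_apply, inv_one, mul_one] using h1
    refine ⟨a, ?_, Or.inl rfl⟩
    obtain ⟨m, hm⟩ := Circle.exp_eq_exp.mp h2
    have : 2 * a = 2 * (↑m * π) := by push_cast at hm ⊢; linarith
    rw [this]
    have : 2 * ((m:ℝ) * π) = m * (2 * π) := by ring
    rw [this, Circle.exp_int_mul_two_pi]
  · set d : ℝ := 2 * π * q with hd
    have h1 := hc 1
    rw [refl_refl, refl_refl] at h1
    have h2 : Circle.exp (d - c) = Circle.exp (c - d) := by
      simpa only [rot_apply, mul_one] using h1
    refine ⟨d - c, ?_, Or.inr ?_⟩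
    · obtain ⟨m, hm⟩ := Circle.exp_eq_exp.mp h2
      have : 2 * (d - c) = m * (2 * π) := by push_cast at hm ⊢; linarith
      rw [this, Circle.exp_int_mul_two_pi]
    · have : c + (d - c) = d := by ring
      rw [this]

lemma rot_neg_cancel (a : ℝ) (z : Circle) : rotMap a (rotMap (-a) z) = z := by
  rw [rot_rot]; simp [rot_apply]

lemma refl_invol (d : ℝ) (z : Circle) : reflMap d (reflMap d z) = z := by
  rw [refl_refl]; simp [rot_apply]

lemma foldl_rot_of_rots : ∀ (l : List (Circle → Circle)), (∀ g ∈ l, ∃ x : ℝ, g = rotMap x) →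
    ∀ x₀ : ℝ, ∃ X, l.foldl (fun acc g => g ∘ acc) (rotMap x₀) = rotMap X := by
  intro l
  induction l with
  | nil => exact fun _ x₀ => ⟨x₀, rfl⟩
  | cons g l ih =>
    intro hmem x₀
    obtain ⟨x, rfl⟩ := hmem g List.mem_cons_self
    rw [List.foldl_cons]
    have he : rotMap x ∘ rotMap x₀ = rotMap (x + x₀) := funext fun z => rot_rot x x₀ z
    rw [he]
    exact ih (fun g hg => hmem g (List.mem_cons_of_mem _ hg)) _



/-- `(𝕊¹,Σ*)` is not co-decomposable to non-point-transitive
(equivalently, non-minimal) transformation semigroups: for every family `(H_α)` of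
subsemigroups of `Σ*`, each containing the identity, whose union generates `Σ*` and which
satisfies the multi condition, some `H_α` is infinite and acts minimally on `𝕊¹`. -/
theorem stmt18 {Γ : Type*} (Hsub : Γ → Set (Circle → Circle))
    (hsub : ∀ α, Hsub α ⊆ SigmaStar)
    (hid : ∀ α, id ∈ Hsub α)
    (hclosed : ∀ α, ∀ f ∈ Hsub α, ∀ g ∈ Hsub α, g ∘ f ∈ Hsub α)
    (hgen : ∀ f ∈ SigmaStar, ∃ l : List (Circle → Circle), l ≠ [] ∧
      (∀ g ∈ l, ∃ α, g ∈ Hsub α) ∧ f = l.foldl (fun acc g => g ∘ acc) id)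
    (hmulti : ∀ l l' : List (Γ × (Circle → Circle)), (l.map Prod.fst).Nodup →
      (∀ p ∈ l, p.2 ∈ Hsub p.1) → l.Perm l' → ∀ z : Circle,
      (l.map Prod.snd).foldl (fun w f => f w) z = (l'.map Prod.snd).foldl (fun w f => f w) z) :
    ∃ α, (Hsub α).Infinite ∧ ∀ z : Circle, Dense (circOrbit z (Hsub α)) := by
  classical
  -- Step 1: some `Hsub α₀` contains a reflection
  obtain ⟨l₀, hne₀, hmem₀, hprod₀⟩ := hgen (reflMap (2*π*((0:ℚ):ℝ))) (Or.inr ⟨0, rfl⟩)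
  have hex : ∃ α₀ c, reflMap c ∈ Hsub α₀ := by
    by_contra hcon
    push_neg at hcon
    have hrots : ∀ g ∈ l₀, ∃ x : ℝ, g = rotMap x := by
      intro g hg
      obtain ⟨α, hα⟩ := hmem₀ g hg
      rcases hsub α hα with ⟨q, rfl⟩ | ⟨q, rfl⟩
      · exact ⟨_, rfl⟩
      · exact absurd hα (hcon α _)
    obtain ⟨X, hX⟩ := foldl_rot_of_rots l₀ hrots 0
    rw [id_eq_rot, hX] at hprod₀
    exact rot_ne_refl X _ hprod₀.symm
  obtain ⟨α₀, c, hεc⟩ := hex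
  -- Step 2: elements of different indices commute pointwise
  have hcomm : ∀ β, β ≠ α₀ → ∀ g ∈ Hsub β, ∀ f ∈ Hsub α₀, ∀ z : Circle, g (f z) = f (g z) := by
    intro β hβ g hg f hf z
    have := hmulti [(α₀, f), (β, g)] [(β, g), (α₀, f)]
      (by simp only [List.map_cons, List.map_nil, List.nodup_cons, List.mem_singleton,
            List.not_mem_nil, not_false_iff, List.nodup_nil, and_true]
          exact fun h => hβ h.symm)
      (by intro p hp
          simp only [List.mem_cons, List.mem_singleton, List.not_mem_nil, or_false] at hp
          rcases hp with rfl | rfl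
          exacts [hf, hg])
      (List.Perm.swap _ _ _) z
    simpa using this
  -- Step 3: decomposition of generated products
  have decomp : ∀ l : List (Circle → Circle), (∀ g ∈ l, ∃ α, g ∈ Hsub α) →
      ∀ h₀ k₀, h₀ ∈ Hsub α₀ → k₀ ∈ Kset c →
      ∃ h k, h ∈ Hsub α₀ ∧ k ∈ Kset c ∧
        l.foldl (fun acc g => g ∘ acc) (h₀ ∘ k₀) = h ∘ k := by
    intro l
    induction l with
    | nil => exact fun _ h₀ k₀ hh hk => ⟨h₀, k₀, hh, hk, rfl⟩
    | cons g l ih =>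
      intro hmem h₀ k₀ hh hk
      obtain ⟨β, hβ⟩ := hmem g List.mem_cons_self
      rw [List.foldl_cons]
      by_cases hβα : β = α₀
      · subst hβα
        have he : g ∘ (h₀ ∘ k₀) = (g ∘ h₀) ∘ k₀ := rfl
        rw [he]
        exact ih (fun g' hg' => hmem g' (List.mem_cons_of_mem _ hg')) _ _
          (hclosed β h₀ hh g hβ) hk
      · have hgK : g ∈ Kset c :=
          mem_K_of_commute (hsub β hβ) (fun z => hcomm β hβα g hβ (reflMap c) hεc z)
        have he : g ∘ (h₀ ∘ k₀) = h₀ ∘ (g ∘ k₀) :=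
          funext fun z => hcomm β hβα g hβ h₀ hh (k₀ z)
        rw [he]
        exact ih (fun g' hg' => hmem g' (List.mem_cons_of_mem _ hg')) _ _ hh (K_comp hgK hk)
  -- Step 4: key lemma: doubled rotations lie in `Hsub α₀`
  have key : ∀ b : ℝ, rotMap b ∈ SigmaStar → rotMap (2 * b) ∈ Hsub α₀ := by
    intro b hb
    obtain ⟨l, -, hmem, hprod⟩ := hgen _ hb
    obtain ⟨h, k, hh, hk, heq⟩ := decomp l hmem id id (hid α₀) (id_mem_K c)
    have hii : (id : Circle → Circle) ∘ id = id := rfl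
    rw [hii, ← hprod] at heq
    obtain ⟨a, ha, hka⟩ := hk
    rcases hka with rfl | rfl
    · have hhval : h = rotMap (b + -a) := by
        funext z
        have h2 := congrFun heq (rotMap (-a) z)
        rw [Function.comp_apply, rot_neg_cancel, rot_rot] at h2
        exact h2.symm
      have h3 : rotMap (2 * b) = h ∘ h := by
        rw [hhval]
        funext z
        rw [Function.comp_apply, rot_rot]
        refine (congrFun (rot_eq_of_exp_eq ?_) z)
        have he : 2 * b = (b + -a + (b + -a)) + 2 * a := by ring
        rw [he, Circle.exp_add, ha, mul_one]
      rw [h3]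
      exact hclosed α₀ h hh h hh
    · have hhval : ∀ w, h w = rotMap b (reflMap (c + a) w) := by
        intro w
        have h2 := congrFun heq (reflMap (c + a) w)
        rw [Function.comp_apply, refl_invol] at h2
        exact h2.symm
      have hmem2 : h ∘ reflMap c ∈ Hsub α₀ := hclosed α₀ (reflMap c) hεc h hh
      have heq2 : h ∘ reflMap c = rotMap (b + a) := by
        funext z
        rw [Function.comp_apply, hhval, refl_refl, rot_rot]
        have harg : b + (c + a - c) = b + a := by ring
        rw [harg]
      have h3 : rotMap (2 * b) = (h ∘ reflMap c) ∘ (h ∘ reflMap c) := by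
        rw [heq2]
        funext z
        rw [Function.comp_apply, rot_rot]
        refine (congrFun (rot_eq_of_exp_eq ?_) z)
        have he : 2 * b = (b + a + (b + a)) + -(2 * a) := by ring
        rw [he, Circle.exp_add, Circle.exp_neg, ha, inv_one, mul_one]
      rw [h3]
      exact hclosed α₀ _ hmem2 _ hmem2
  -- Step 5: all rational rotations lie in `Hsub α₀`
  have hrot : ∀ q : ℚ, rotMap (2 * π * (q : ℝ)) ∈ Hsub α₀ := by
    intro q
    have h1 : rotMap (2 * π * ((q/2 : ℚ) : ℝ)) ∈ SigmaStar := Or.inl ⟨q/2, rfl⟩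
    have h2 := key _ h1
    have h3 : 2 * (2 * π * ((q/2 : ℚ) : ℝ)) = 2 * π * (q : ℝ) := by push_cast; ring
    rwa [h3] at h2
  refine ⟨α₀, ?_, ?_⟩
  -- infinite
  · apply Set.infinite_of_injective_forall_mem
      (f := fun n : ℕ => rotMap (2 * π * ((1/(n+2) : ℚ) : ℝ)))
    · intro n m hnm
      have h1 := congrFun hnm 1
      simp only [rot_apply, mul_one] at h1
      obtain ⟨k, hk⟩ := Circle.exp_eq_exp.mp h1
      have hn2 : (0:ℝ) < (n:ℝ) + 2 := by positivity
      have hm2 : (0:ℝ) < (m:ℝ) + 2 := by positivity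
      have hcast : ((1/(n+2) : ℚ) : ℝ) = 1/((n:ℝ)+2) ∧ ((1/(m+2) : ℚ) : ℝ) = 1/((m:ℝ)+2) := by
        constructor <;> (push_cast; ring)
      rw [hcast.1, hcast.2] at hk
      have hkk : (k:ℝ) = 1/((n:ℝ)+2) - 1/((m:ℝ)+2) := by
        have hπ := Real.pi_ne_zero
        field_simp at hk ⊢
        nlinarith [Real.pi_pos]
      have hb1 : 1/((n:ℝ)+2) ≤ 1/2 := by
        rw [div_le_div_iff₀ hn2 (by norm_num)]; linarith
      have hb2 : 1/((m:ℝ)+2) ≤ 1/2 := by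
        rw [div_le_div_iff₀ hm2 (by norm_num)]; linarith
      have hp1 : (0:ℝ) < 1/((n:ℝ)+2) := by positivity
      have hp2 : (0:ℝ) < 1/((m:ℝ)+2) := by positivity
      have hk0 : k = 0 := by
        have hl : (-1:ℝ) < (k:ℝ) := by rw [hkk]; linarith
        have hr : (k:ℝ) < 1 := by rw [hkk]; linarith
        have hl' : (-1:ℤ) < k := by exact_mod_cast hl
        have hr' : k < 1 := by exact_mod_cast hr
        omega
      rw [hk0] at hkk
      have h0 : 1/((n:ℝ)+2) = 1/((m:ℝ)+2) := by
        rw [← sub_eq_zero]; simpa using hkk.symm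
      field_simp at h0
      exact_mod_cast (by linarith : (n:ℝ) = m)
    · intro n
      exact hrot (1/(n+2))
  -- dense orbits
  · intro z
    rw [dense_iff_inter_open]
    intro U hU hUne
    obtain ⟨w, hw⟩ := hUne
    obtain ⟨x, hx⟩ : ∃ x : ℝ, Circle.exp x * z = w :=
      ⟨Complex.arg ((w * z⁻¹ : Circle) : ℂ), by
        rw [Circle.exp_arg (w * z⁻¹)]
        exact inv_mul_cancel_right w z⟩
    have hV : IsOpen ((fun x : ℝ => Circle.exp x * z) ⁻¹' U) :=
      hU.preimage (Circle.exp.continuous.mul continuous_const)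
    have hxV : x ∈ (fun x : ℝ => Circle.exp x * z) ⁻¹' U := by
      simp only [Set.mem_preimage]; rw [hx]; exact hw
    have hW : IsOpen ((fun t : ℝ => 2 * π * t) ⁻¹' ((fun x : ℝ => Circle.exp x * z) ⁻¹' U)) :=
      hV.preimage (continuous_const.mul continuous_id)
    have h2π : (2 : ℝ) * π ≠ 0 := by positivity
    have hxW : x / (2*π) ∈ (fun t : ℝ => 2 * π * t) ⁻¹' ((fun x : ℝ => Circle.exp x * z) ⁻¹' U) := by
      simp only [Set.mem_preimage]
      rw [mul_div_cancel₀ _ h2π]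
      exact hxV
    obtain ⟨q, hq⟩ := (Rat.denseRange_cast (𝕜 := ℝ)).exists_mem_open hW ⟨_, hxW⟩
    simp only [Set.mem_preimage] at hq
    exact ⟨Circle.exp (2 * π * (q:ℝ)) * z, hq, rotMap (2 * π * (q:ℝ)), hrot q, rfl⟩
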